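/- Let E₁,…,Eₙ,F be Banach spaces with E_{t+1},…,Eₙ ≠ {0}, let 1 ≤ t < n, r > 0 and s₁,…,s_t ∈ (0,∞]. If every continuous n-linear mapping S : E₁×⋯×Eₙ → F is absolutely (r;s₁,…,s_t,∞,…,∞)-summing at the origin, then every continuous t-linear mapping T : E₁×⋯×E_t → F is absolutely (r;s₁,…,s_t)-summing at the origin: ∑_j ‖T(x_j^{(1)},…,x_j^{(t)})‖^r < ∞ whenever (x_j^{(l)}) ∈ ℓ_{s_l}^w(E_l) for l = 1,…,t. -/

import Mathlib

open scoped ENNReal NNReal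

noncomputable section

/-- A sequence `x` in `E` is weakly `q`-summable (`0 < q < ∞`), i.e. belongs to `ℓ_q^w(E)`:
`∑_j ‖φ (x j)‖^q < ∞` for every continuous linear functional `φ`. -/
def WeaklySummable (𝕜 : Type*) [RCLike 𝕜] {E : Type*} [NormedAddCommGroup E]
    [NormedSpace 𝕜 E] (q : ℝ) (x : ℕ → E) : Prop :=
  ∀ φ : E →L[𝕜] 𝕜, Summable fun j => ‖φ (x j)‖ ^ q

/-- Membership in `ℓ_q^w(E)` for `q ∈ (0,∞]`; for `q = ∞` this means boundedness. -/
def MemWeakLp (𝕜 : Type*) [RCLike 𝕜] {E : Type*} [NormedAddCommGroup E]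
    [NormedSpace 𝕜 E] (q : ℝ≥0∞) (x : ℕ → E) : Prop :=
  if q = ⊤ then ∃ M : ℝ, ∀ j, ‖x j‖ ≤ M
  else ∀ φ : E →L[𝕜] 𝕜, Summable fun j => ‖φ (x j)‖ ^ q.toReal

/-- Let `1 ≤ t < n`, `r > 0`, `s₁,…,s_t ∈ (0,∞]`, and suppose
`E_{t+1},…,Eₙ ≠ {0}`. If every continuous `n`-linear `S : E₁ × ⋯ × Eₙ → F` is absolutely
`(r;s₁,…,s_t,∞,…,∞)`-summing at the origin, then every continuous `t`-linear
`T : E₁ × ⋯ × E_t → F` is absolutely `(r;s₁,…,s_t)`-summing at the origin. -/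
theorem summing_of_lower_multilinear
    {𝕜 : Type*} [RCLike 𝕜] {n t : ℕ} (ht : 1 ≤ t) (htn : t < n)
    {E : Fin n → Type*}
    [∀ i, NormedAddCommGroup (E i)] [∀ i, NormedSpace 𝕜 (E i)] [∀ i, CompleteSpace (E i)]
    {F : Type*} [NormedAddCommGroup F] [NormedSpace 𝕜 F] [CompleteSpace F]
    (hnt : ∀ i : Fin n, t ≤ (i : ℕ) → ∃ v : E i, v ≠ 0)
    {r : ℝ} (hr : 0 < r) (s : Fin t → ℝ≥0∞) (hs : ∀ l, 0 < s l)
    (hS : ∀ S : ContinuousMultilinearMap 𝕜 E F, ∀ x : ∀ i : Fin n, ℕ → E i,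
      (∀ (i : Fin n) (hi : (i : ℕ) < t), MemWeakLp 𝕜 (s ⟨i, hi⟩) (x i)) →
      (∀ i : Fin n, t ≤ (i : ℕ) → ∃ M : ℝ, ∀ j, ‖x i j‖ ≤ M) →
      Summable fun j => ‖S (fun i => x i j)‖ ^ r) :
    ∀ T : ContinuousMultilinearMap 𝕜 (fun l : Fin t => E (Fin.castLE htn.le l)) F,
      ∀ x : ∀ l : Fin t, ℕ → E (Fin.castLE htn.le l),
        (∀ l, MemWeakLp 𝕜 (s l) (x l)) →
        Summable fun j => ‖T (fun l => x l j)‖ ^ r := by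
  classical
  intro T x hx
  choose v hv using hnt
  have hφ' : ∀ (i : Fin n) (h : t ≤ (i : ℕ)),
      ∃ g : E i →L[𝕜] 𝕜, g (v i h) = (‖v i h‖ : 𝕜) := by
    intro i h
    obtain ⟨g, -, hg⟩ := exists_dual_vector 𝕜 (v i h) (norm_ne_zero_iff.mpr (hv i h))
    exact ⟨g, hg⟩
  choose φ hφ using hφ'
  -- non-dependent versions
  set w : ∀ i : Fin n, E i := fun i => if h : t ≤ (i : ℕ) then v i h else 0 with hw
  set ψ : ∀ i : Fin n, E i →L[𝕜] 𝕜 := fun i => if h : t ≤ (i : ℕ) then φ i h else 0 with hψ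
  -- the auxiliary n-linear map
  set S₀ : MultilinearMap 𝕜 E F :=
    { toFun := fun y => (∏ i : Fin n, if (i : ℕ) < t then (1 : 𝕜) else ψ i (y i)) •
        T (fun l => y (Fin.castLE htn.le l))
      map_update_add' := by
        intro _dec m i a b
        by_cases h : (i : ℕ) < t
        · have hprod : ∀ z : E i,
              (∏ k : Fin n, if (k : ℕ) < t then (1 : 𝕜) else ψ k (Function.update m i z k))
              = ∏ k : Fin n, if (k : ℕ) < t then (1 : 𝕜) else ψ k (m k) := by
            intro z
            refine Finset.prod_congr rfl fun k _ => ?_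
            by_cases hk : (k : ℕ) < t
            · simp [hk]
            · have hki : k ≠ i := fun e => hk (e ▸ h)
              rw [Function.update_of_ne hki]
          have hupd : ∀ z : E i,
              (fun l : Fin t => Function.update m i z (Fin.castLE htn.le l))
              = Function.update (fun l : Fin t => m (Fin.castLE htn.le l)) ⟨(i : ℕ), h⟩ z := by
            intro z
            funext l
            rcases eq_or_ne l ⟨(i : ℕ), h⟩ with rfl | hl
            · rw [Function.update_self]
              exact Function.update_self i z m
            · rw [Function.update_of_ne hl, Function.update_of_ne]
              intro e
              have e2 : (l : ℕ) = (i : ℕ) := congrArg Fin.val e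
              exact hl (Fin.ext e2)
          simp only [hprod, hupd]
          rw [T.map_update_add, smul_add]
        · have hT : ∀ z : E i,
              (fun l : Fin t => Function.update m i z (Fin.castLE htn.le l))
              = fun l : Fin t => m (Fin.castLE htn.le l) := by
            intro z
            funext l
            rw [Function.update_of_ne]
            intro e
            have := congrArg Fin.val e
            simp only [Fin.coe_castLE] at this
            omega
          have hsplit : ∀ z : E i,
              (∏ k : Fin n, if (k : ℕ) < t then (1 : 𝕜) else ψ k (Function.update m i z k))
              = ψ i z * ∏ k ∈ Finset.univ.erase i,
                  (if (k : ℕ) < t then (1 : 𝕜) else ψ k (m k)) := by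
            intro z
            rw [← Finset.mul_prod_erase Finset.univ _ (Finset.mem_univ i)]
            congr 1
            · simp [h]
            · refine Finset.prod_congr rfl fun k hk => ?_
              rw [Function.update_of_ne (Finset.ne_of_mem_erase hk)]
          simp only [hsplit, hT]
          rw [map_add, add_mul, add_smul]
      map_update_smul' := by
        intro _dec m i c a
        by_cases h : (i : ℕ) < t
        · have hprod : ∀ z : E i,
              (∏ k : Fin n, if (k : ℕ) < t then (1 : 𝕜) else ψ k (Function.update m i z k))
              = ∏ k : Fin n, if (k : ℕ) < t then (1 : 𝕜) else ψ k (m k) := by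
            intro z
            refine Finset.prod_congr rfl fun k _ => ?_
            by_cases hk : (k : ℕ) < t
            · simp [hk]
            · have hki : k ≠ i := fun e => hk (e ▸ h)
              rw [Function.update_of_ne hki]
          have hupd : ∀ z : E i,
              (fun l : Fin t => Function.update m i z (Fin.castLE htn.le l))
              = Function.update (fun l : Fin t => m (Fin.castLE htn.le l)) ⟨(i : ℕ), h⟩ z := by
            intro z
            funext l
            rcases eq_or_ne l ⟨(i : ℕ), h⟩ with rfl | hl
            · rw [Function.update_self]
              exact Function.update_self i z m
            · rw [Function.update_of_ne hl, Function.update_of_ne]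
              intro e
              have e2 : (l : ℕ) = (i : ℕ) := congrArg Fin.val e
              exact hl (Fin.ext e2)
          simp only [hprod, hupd]
          rw [T.map_update_smul, smul_comm]
        · have hT : ∀ z : E i,
              (fun l : Fin t => Function.update m i z (Fin.castLE htn.le l))
              = fun l : Fin t => m (Fin.castLE htn.le l) := by
            intro z
            funext l
            rw [Function.update_of_ne]
            intro e
            have := congrArg Fin.val e
            simp only [Fin.coe_castLE] at this
            omega
          have hsplit : ∀ z : E i,
              (∏ k : Fin n, if (k : ℕ) < t then (1 : 𝕜) else ψ k (Function.update m i z k))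
              = ψ i z * ∏ k ∈ Finset.univ.erase i,
                  (if (k : ℕ) < t then (1 : 𝕜) else ψ k (m k)) := by
            intro z
            rw [← Finset.mul_prod_erase Finset.univ _ (Finset.mem_univ i)]
            congr 1
            · simp [h]
            · refine Finset.prod_congr rfl fun k hk => ?_
              rw [Function.update_of_ne (Finset.ne_of_mem_erase hk)]
          simp only [hsplit, hT]
          rw [map_smul, smul_eq_mul, mul_assoc, smul_smul]
      } with hS₀
  -- the reindexing identity
  have hreindex : ∀ y : ∀ i, E i,
      (∏ l : Fin t, ‖y (Fin.castLE htn.le l)‖)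
        = ∏ k : Fin n, (if (k : ℕ) < t then ‖y k‖ else 1) := by
    intro y
    rw [← Finset.prod_filter]
    refine Finset.prod_bij (fun (l : Fin t) _ => Fin.castLE htn.le l) ?_ ?_ ?_ ?_
    · intro l _
      simp [l.isLt]
    · intro l₁ _ l₂ _ e
      have e' : Fin.castLE htn.le l₁ = Fin.castLE htn.le l₂ := e
      have e3 : ((Fin.castLE htn.le l₁ : Fin n) : ℕ) = ((Fin.castLE htn.le l₂ : Fin n) : ℕ) :=
        congrArg Fin.val e'
      exact Fin.ext (show (l₁ : ℕ) = (l₂ : ℕ) from e3)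
    · intro k hk
      simp only [Finset.mem_filter, Finset.mem_univ, true_and] at hk
      exact ⟨⟨(k : ℕ), hk⟩, Finset.mem_univ _, rfl⟩
    · intro l _
      rfl
  -- the boundedness estimate
  have hbound : ∀ y : ∀ i, E i,
      ‖S₀ y‖ ≤ ((∏ i : Fin n, if (i : ℕ) < t then 1 else ‖ψ i‖) * ‖T‖) * ∏ i, ‖y i‖ := by
    intro y
    rw [hS₀]
    simp only [MultilinearMap.coe_mk, norm_smul]
    calc ‖∏ i : Fin n, if (i : ℕ) < t then (1 : 𝕜) else ψ i (y i)‖ *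
          ‖T fun l => y (Fin.castLE htn.le l)‖
        ≤ (∏ i : Fin n, if (i : ℕ) < t then 1 else ‖ψ i‖ * ‖y i‖) *
          (‖T‖ * ∏ l : Fin t, ‖y (Fin.castLE htn.le l)‖) := by
          refine mul_le_mul ?_ (T.le_opNorm _) (norm_nonneg _) ?_
          · rw [norm_prod]
            refine Finset.prod_le_prod (fun k _ => norm_nonneg _) fun k _ => ?_
            by_cases hk : (k : ℕ) < t
            · simp [hk]
            · simp only [hk, if_false]
              exact (ψ k).le_opNorm _
          · exact Finset.prod_nonneg fun k _ => by positivity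
      _ = ((∏ i : Fin n, if (i : ℕ) < t then 1 else ‖ψ i‖) * ‖T‖) * ∏ i, ‖y i‖ := by
          rw [hreindex y]
          rw [show (∏ i : Fin n, if (i : ℕ) < t then 1 else ‖ψ i‖ * ‖y i‖) *
              (‖T‖ * ∏ k : Fin n, (if (k : ℕ) < t then ‖y k‖ else 1))
              = (∏ i : Fin n, ((if (i : ℕ) < t then 1 else ‖ψ i‖ * ‖y i‖) *
                  (if (i : ℕ) < t then ‖y i‖ else 1))) * ‖T‖ by
            rw [Finset.prod_mul_distrib]; ring]
          rw [show (∏ i : Fin n, ((if (i : ℕ) < t then 1 else ‖ψ i‖ * ‖y i‖) *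
              (if (i : ℕ) < t then ‖y i‖ else 1)))
              = ∏ i : Fin n, ((if (i : ℕ) < t then 1 else ‖ψ i‖) * ‖y i‖) from
            Finset.prod_congr rfl fun k _ => by by_cases hk : (k : ℕ) < t <;> simp [hk] <;> ring]
          rw [Finset.prod_mul_distrib]; ring
  set S : ContinuousMultilinearMap 𝕜 E F := S₀.mkContinuous _ hbound with hSdef
  -- the sequences
  set x' : ∀ i : Fin n, ℕ → E i :=
    fun i j => if h : (i : ℕ) < t then (x ⟨(i : ℕ), h⟩ j : E i) else w i with hx'
  have hweak : ∀ (i : Fin n) (hi : (i : ℕ) < t), MemWeakLp 𝕜 (s ⟨i, hi⟩) (x' i) := by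
    intro i hi
    have : x' i = fun j => (x ⟨(i : ℕ), hi⟩ j : E i) := by
      funext j; simp only [hx', dif_pos hi]
    rw [this]
    exact hx ⟨(i : ℕ), hi⟩
  have hbdd : ∀ i : Fin n, t ≤ (i : ℕ) → ∃ M : ℝ, ∀ j, ‖x' i j‖ ≤ M := by
    intro i hi
    refine ⟨‖w i‖, fun j => ?_⟩
    simp [hx', not_lt.mpr hi]
  have hsum := hS S x' hweak hbdd
  -- compute S at x'
  have hc : ∀ j : ℕ,
      ‖S fun i => x' i j‖
        = (∏ i : Fin n, if (i : ℕ) < t then 1 else ‖w i‖) * ‖T fun l => x l j‖ := by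
    intro j
    have h1 : S (fun i => x' i j) =
        (∏ i : Fin n, if (i : ℕ) < t then (1 : 𝕜) else ψ i (x' i j)) •
          T (fun l => x' (Fin.castLE htn.le l) j) := rfl
    have h2 : (fun l : Fin t => x' (Fin.castLE htn.le l) j) = fun l => x l j := by
      funext l
      have hl : ((Fin.castLE htn.le l : Fin n) : ℕ) < t := l.isLt
      simp only [hx', dif_pos hl]
      rfl
    have h3 : ∀ i : Fin n, ¬ (i : ℕ) < t → ψ i (x' i j) = (‖w i‖ : 𝕜) := by
      intro i hi
      have hi' : t ≤ (i : ℕ) := not_lt.mp hi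
      simp only [hx', dif_neg hi, hψ, hw, dif_pos hi']
      exact hφ i hi'
    rw [h1, h2, norm_smul, norm_prod]
    congr 1
    refine Finset.prod_congr rfl fun k _ => ?_
    by_cases hk : (k : ℕ) < t
    · simp [hk]
    · rw [if_neg hk, if_neg hk, h3 k hk, RCLike.norm_ofReal, abs_of_nonneg (norm_nonneg _)]
  -- the scalar is positive
  set c : ℝ := ∏ i : Fin n, if (i : ℕ) < t then 1 else ‖w i‖ with hcdef
  have hcpos : 0 < c := by
    refine Finset.prod_pos fun k _ => ?_
    by_cases hk : (k : ℕ) < t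
    · simp [hk]
    · have hk' : t ≤ (k : ℕ) := not_lt.mp hk
      simp only [if_neg hk, hw, dif_pos hk']
      exact norm_pos_iff.mpr (hv k hk')
  have key : Summable fun j => c ^ r * ‖T fun l => x l j‖ ^ r := by
    refine hsum.congr fun j => ?_
    rw [hc j, Real.mul_rpow hcpos.le (norm_nonneg _)]
  exact (summable_mul_left_iff (by positivity : c ^ r ≠ 0)).mp key
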